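/- Let η⋆_w, η⋆_{w'}, δ⋆_{w'} : U → [0,1] be measurable with |η⋆_w(u) − η⋆_{w'}(u)| ≤ ε_w pointwise and δ⋆_{w'}(u) ≤ U_X with U_X > 0. Define ω_w = E[η⋆_w], κ0' = E[(1−η⋆_{w'})δ⋆_{w'}], χ' = E[δ⋆_{w'}]. Then ω_w ≤ 1 − (κ0' − ε_w·χ') / U_X. -/
import Mathlib


open MeasureTheory

/-- Second cross-w upper bound of Theorem 2 of Silva–Evans: with `ω_w = E[η⋆_w]`,
`κ₀' = E[(1-η⋆_{w'})δ⋆_{w'}]`, `χ' = E[δ⋆_{w'}]`, if `|η⋆_w - η⋆_{w'}| ≤ ε_w` and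
`δ⋆_{w'} ≤ U_X` pointwise (`U_X > 0`), then `ω_w ≤ 1 - (κ₀' - ε_w·χ')/U_X`. -/
theorem stmt6 {U : Type*} [MeasurableSpace U] (P : Measure U) [IsProbabilityMeasure P]
    (ηw ηw' δw' : U → ℝ) (hη1 : Measurable ηw) (hη2 : Measurable ηw') (hδ : Measurable δw')
    (hηw : ∀ u, ηw u ∈ Set.Icc (0:ℝ) 1) (hηw' : ∀ u, ηw' u ∈ Set.Icc (0:ℝ) 1)
    (hδw' : ∀ u, δw' u ∈ Set.Icc (0:ℝ) 1)
    (εw UX : ℝ) (hUX : 0 < UX)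
    (hcross : ∀ u, |ηw u - ηw' u| ≤ εw)
    (hδU : ∀ u, δw' u ≤ UX) :
    ∫ u, ηw u ∂P ≤ 1 - ((∫ u, (1 - ηw' u) * δw' u ∂P) - εw * ∫ u, δw' u ∂P) / UX := by
  have hηint : Integrable ηw P := by
    refine (integrable_const (1:ℝ)).mono' hη1.aestronglyMeasurable ?_
    filter_upwards with u
    rw [Real.norm_eq_abs, abs_le]
    exact ⟨by linarith [(hηw u).1], (hηw u).2⟩
  have hδint : Integrable δw' P := by
    refine (integrable_const (1:ℝ)).mono' hδ.aestronglyMeasurable ?_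
    filter_upwards with u
    rw [Real.norm_eq_abs, abs_le]
    exact ⟨by linarith [(hδw' u).1], (hδw' u).2⟩
  have haint : Integrable (fun u => (1 - ηw u) * UX + εw * δw' u) P := by
    refine (integrable_const (|UX| + |εw|)).mono'
      (((measurable_const.sub hη1).mul_const UX).add (hδ.const_mul εw)).aestronglyMeasurable ?_
    filter_upwards with u
    have h1 := (hηw u).1; have h2 := (hηw u).2
    have h3 := (hδw' u).1; have h4 := (hδw' u).2
    calc ‖(1 - ηw u) * UX + εw * δw' u‖ ≤ ‖(1 - ηw u) * UX‖ + ‖εw * δw' u‖ := norm_add_le _ _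
      _ ≤ |UX| + |εw| := by
          rw [Real.norm_eq_abs, Real.norm_eq_abs, abs_mul, abs_mul]
          have : |1 - ηw u| ≤ 1 := by rw [abs_le]; constructor <;> linarith
          have h5 : |δw' u| ≤ 1 := by rw [abs_le]; constructor <;> linarith
          nlinarith [abs_nonneg UX, abs_nonneg εw, abs_nonneg (1 - ηw u), abs_nonneg (δw' u)]
  have hpint : Integrable (fun u => (1 - ηw' u) * δw' u) P := by
    refine (integrable_const (1:ℝ)).mono'
      ((measurable_const.sub hη2).mul hδ).aestronglyMeasurable ?_
    filter_upwards with u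
    rw [Real.norm_eq_abs, abs_le]
    constructor
    · nlinarith [(hηw' u).1, (hηw' u).2, (hδw' u).1, (hδw' u).2]
    · nlinarith [(hηw' u).1, (hηw' u).2, (hδw' u).1, (hδw' u).2]
  -- key pointwise inequality
  have key : ∫ u, (1 - ηw' u) * δw' u ∂P ≤
      ∫ u, ((1 - ηw u) * UX + εw * δw' u) ∂P := by
    refine integral_mono hpint ?_ ?_
    · exact haint
    · intro u
      have h1 := (hηw u).2
      have h2 := (hδw' u).1
      have h3 := hδU u
      have h4 := (abs_le.mp (hcross u)).2
      have e1 : 0 ≤ (1 - ηw u) * (UX - δw' u) := mul_nonneg (by linarith) (by linarith)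
      have e2 : 0 ≤ (εw - (ηw u - ηw' u)) * δw' u := mul_nonneg (by linarith) h2
      simp only []
      nlinarith [e1, e2]
  have hE : ∫ u, ((1 - ηw u) * UX + εw * δw' u) ∂P
      = (1 - ∫ u, ηw u ∂P) * UX + εw * ∫ u, δw' u ∂P := by
    have hfirst : Integrable (fun u => (1 - ηw u) * UX) P :=
      ((integrable_const 1).sub hηint).mul_const UX
    rw [integral_add hfirst (hδint.const_mul εw), integral_mul_const, integral_const_mul]
    have : ∫ u, (1 - ηw u) ∂P = 1 - ∫ u, ηw u ∂P := by
      rw [integral_sub (integrable_const 1) hηint, integral_const]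
      simp
    rw [this]
  rw [hE] at key
  have h : (∫ u, (1 - ηw' u) * δw' u ∂P - εw * ∫ u, δw' u ∂P) / UX ≤ 1 - ∫ u, ηw u ∂P := by
    rw [div_le_iff₀ hUX]
    nlinarith [key]
  linarith
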